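/- arXiv:math/0602055 — 3 statements merged into one kernel-verified Lean document; each statement's English description precedes it below -/
import Mathlib

section
/- Let S be an invertible symmetric 2n×2n complex matrix, 𝔤 := {X ∈ Mat_{2n}(ℂ) : Xᵀ S + S X = 0}, and for i,j ∈ [2n] set X_{i,j} := E_{i,j} − S⁻¹ E_{j,i} S ∈ 𝔤 and X̃_{i,j} := Σ_{k∈[2n]} S_{k,j} ι(X_{i,k}) ∈ U(𝔤). Then the matrix (X̃_{i,j}) is alternating, and its Pfaffian Pf(𝑿) := Pf((X̃_{i,j})) lies in the center of U(𝔤), i.e. it commutes with every element of U(𝔤). -/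
open Matrix

set_option synthInstance.maxHeartbeats 1000000
set_option maxHeartbeats 1000000

noncomputable section

/-- Noncommutative Pfaffian of a matrix `A` with entries in a `ℂ`-algebra satisfying
`A_{j,i} = −A_{i,j}`:
`Pf(A) := (1/(2^m m!)) Σ_{σ∈S_{2m}} sgn(σ) A_{σ(1),σ(2)} ⋯ A_{σ(2m−1),σ(2m)}`
(junk value `0` if the size is odd). -/
def ncPf {A : Type*} [Ring A] [Algebra ℂ A] {m : ℕ} (M : Matrix (Fin m) (Fin m) A) : A :=
  if hm : m % 2 = 0 then
    ((2 : ℂ) ^ (m / 2) * (m / 2).factorial)⁻¹ •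
      ∑ σ : Equiv.Perm (Fin m),
        (Equiv.Perm.sign σ : ℤ) •
          (List.ofFn fun i : Fin (m / 2) =>
            M (σ ⟨2 * i.1, by have := i.2; omega⟩)
              (σ ⟨2 * i.1 + 1, by have := i.2; omega⟩)).prod
  else 0

section Aux

variable {A : Type*} [Ring A] [Algebra ℂ A]

private def adL (x : A) : A →ₗ[ℂ] A := LinearMap.mulLeft ℂ x - LinearMap.mulRight ℂ x

private lemma adL_apply (x u : A) : adL x u = x * u - u * x := rfl

private lemma adL_mul (x a b : A) : adL x (a * b) = adL x a * b + a * adL x b := by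
  simp only [adL_apply]; noncomm_ring

private lemma adL_listProd (x : A) : ∀ (N : ℕ) (f : Fin N → A),
    adL x (List.ofFn f).prod
      = ∑ i : Fin N, (List.ofFn (Function.update f i (adL x (f i)))).prod := by
  intro N
  induction N with
  | zero => intro f; simp [adL_apply]
  | succ N ih =>
      intro f
      have h0 : (List.ofFn f).prod = f 0 * (List.ofFn fun i : Fin N => f i.succ).prod := by
        rw [List.ofFn_succ, List.prod_cons]
      rw [h0, adL_mul, ih, Fin.sum_univ_succ]
      congr 1
      · have h1 : (fun i : Fin N => Function.update f 0 (adL x (f 0)) i.succ)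
            = fun i : Fin N => f i.succ := by
          funext i; rw [Function.update_of_ne (Fin.succ_ne_zero i)]
        rw [List.ofFn_succ, List.prod_cons, Function.update_self, h1]
      · rw [Finset.mul_sum]
        refine Finset.sum_congr rfl fun i _ => ?_
        have h2 : (fun j : Fin N => Function.update f i.succ (adL x (f i.succ)) j.succ)
            = Function.update (fun j : Fin N => f j.succ) i (adL x (f i.succ)) := by
          funext j
          by_cases hj : j = i
          · subst hj
            rw [Function.update_self, Function.update_self]
          · rw [Function.update_of_ne (fun h => hj (Fin.succ_injective _ h)),
              Function.update_of_ne hj]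
        rw [List.ofFn_succ, List.prod_cons,
          Function.update_of_ne (Fin.succ_ne_zero i).symm, h2]

private lemma sum_pairs {β : Type*} [AddCommMonoid β] {m : ℕ} (hm : m % 2 = 0)
    (h : Fin m → β) :
    ∑ t : Fin m, h t
      = ∑ i : Fin (m / 2),
          (h ⟨2 * i.1, by have := i.2; omega⟩ + h ⟨2 * i.1 + 1, by have := i.2; omega⟩) := by
  have e : ∀ p : Fin (m / 2) × Fin 2, 2 * p.1.1 + p.2.1 < m := by
    rintro ⟨i, s⟩; have := i.2; have := s.2; simp only; omega
  have key : ∑ p : Fin (m / 2) × Fin 2, h ⟨2 * p.1.1 + p.2.1, e p⟩ = ∑ t, h t := by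
    apply Fintype.sum_bijective (fun p : Fin (m / 2) × Fin 2 => (⟨2 * p.1.1 + p.2.1, e p⟩ : Fin m))
    · constructor
      · rintro ⟨i, s⟩ ⟨i', s'⟩ hps
        have hv : 2 * i.1 + s.1 = 2 * i'.1 + s'.1 := congrArg Fin.val hps
        have hs := s.2; have hs' := s'.2
        have : i.1 = i'.1 ∧ s.1 = s'.1 := by omega
        exact Prod.ext (Fin.ext this.1) (Fin.ext this.2)
      · intro t
        refine ⟨⟨⟨t.1 / 2, by have := t.2; omega⟩, ⟨t.1 % 2, by omega⟩⟩, ?_⟩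
        exact Fin.ext (by simp only; omega)
    · exact fun p => rfl
  rw [← key, Fintype.sum_prod_type]
  refine Finset.sum_congr rfl fun i _ => ?_
  rw [Fin.sum_univ_two]
  congr 1 <;> exact congrArg h (Fin.ext (by simp))

end Aux

section Key

variable {A : Type*} [Ring A] [Algebra ℂ A]

private lemma ncPf_comm {m : ℕ} (hm : m % 2 = 0)
    (M : Matrix (Fin m) (Fin m) A) (Z : Matrix (Fin m) (Fin m) ℂ) (hZ : Z.trace = 0)
    (x : A)
    (hxM : ∀ i j, x * M i j - M i j * x
      = (∑ k, Z k i • M k j) + ∑ k, Z k j • M i k) :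
    x * ncPf M = ncPf M * x := by
  classical
  let F : (Fin m → Fin m) → A := fun g =>
    (List.ofFn fun i : Fin (m / 2) =>
      M (g ⟨2 * i.1, by have := i.2; omega⟩) (g ⟨2 * i.1 + 1, by have := i.2; omega⟩)).prod
  have hPf : ncPf M = ((2 : ℂ) ^ (m / 2) * (m / 2).factorial)⁻¹ •
      ∑ σ : Equiv.Perm (Fin m), (Equiv.Perm.sign σ : ℤ) • F ⇑σ := by
    rw [ncPf, dif_pos hm]
  set P : MultilinearMap ℂ (fun _ : Fin (m / 2) => A) A :=
    MultilinearMap.mkPiAlgebraFin ℂ (m / 2) A with hP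
  -- slot replacement lemmas
  have hupd1 : ∀ (g : Fin m → Fin m) (i : Fin (m / 2)) (k : Fin m),
      P (Function.update
          (fun i' : Fin (m / 2) =>
            M (g ⟨2 * i'.1, by have := i'.2; omega⟩) (g ⟨2 * i'.1 + 1, by have := i'.2; omega⟩))
          i (M k (g ⟨2 * i.1 + 1, by have := i.2; omega⟩)))
        = F (Function.update g ⟨2 * i.1, by have := i.2; omega⟩ k) := by
    intro g i k
    show _ = (List.ofFn _).prod
    rw [hP, MultilinearMap.mkPiAlgebraFin_apply]
    congr 1
    congr 1
    funext i'
    by_cases hi : i' = i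
    · subst hi
      rw [Function.update_self, Function.update_self,
        Function.update_of_ne (a := (⟨2 * i'.1 + 1, by have := i'.2; omega⟩ : Fin m))
          (by intro hc; have := congrArg Fin.val hc; simp only at this; omega)]
    · have hvi : i'.1 ≠ i.1 := fun hc => hi (Fin.ext hc)
      rw [Function.update_of_ne hi,
        Function.update_of_ne (a := (⟨2 * i'.1, by have := i'.2; omega⟩ : Fin m))
          (by intro hc; have := congrArg Fin.val hc; simp only at this; omega),
        Function.update_of_ne (a := (⟨2 * i'.1 + 1, by have := i'.2; omega⟩ : Fin m))
          (by intro hc; have := congrArg Fin.val hc; simp only at this; omega)]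
  have hupd2 : ∀ (g : Fin m → Fin m) (i : Fin (m / 2)) (k : Fin m),
      P (Function.update
          (fun i' : Fin (m / 2) =>
            M (g ⟨2 * i'.1, by have := i'.2; omega⟩) (g ⟨2 * i'.1 + 1, by have := i'.2; omega⟩))
          i (M (g ⟨2 * i.1, by have := i.2; omega⟩) k))
        = F (Function.update g ⟨2 * i.1 + 1, by have := i.2; omega⟩ k) := by
    intro g i k
    show _ = (List.ofFn _).prod
    rw [hP, MultilinearMap.mkPiAlgebraFin_apply]
    congr 1
    congr 1
    funext i'
    by_cases hi : i' = i
    · subst hi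
      rw [Function.update_self, Function.update_self,
        Function.update_of_ne (a := (⟨2 * i'.1, by have := i'.2; omega⟩ : Fin m))
          (by intro hc; have := congrArg Fin.val hc; simp only at this; omega)]
    · have hvi : i'.1 ≠ i.1 := fun hc => hi (Fin.ext hc)
      rw [Function.update_of_ne hi,
        Function.update_of_ne (a := (⟨2 * i'.1, by have := i'.2; omega⟩ : Fin m))
          (by intro hc; have := congrArg Fin.val hc; simp only at this; omega),
        Function.update_of_ne (a := (⟨2 * i'.1 + 1, by have := i'.2; omega⟩ : Fin m))
          (by intro hc; have := congrArg Fin.val hc; simp only at this; omega)]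
  -- derivative of F along σ
  have hDF : ∀ σ : Equiv.Perm (Fin m),
      adL x (F ⇑σ)
        = ∑ t : Fin m, ∑ k : Fin m, Z k (σ t) • F (Function.update (⇑σ) t k) := by
    intro σ
    rw [sum_pairs hm (h := fun t => ∑ k : Fin m, Z k (σ t) • F (Function.update (⇑σ) t k))]
    show adL x (List.ofFn fun i : Fin (m / 2) =>
        M (σ ⟨2 * i.1, by have := i.2; omega⟩) (σ ⟨2 * i.1 + 1, by have := i.2; omega⟩)).prod = _
    rw [adL_listProd]
    refine Finset.sum_congr rfl fun i _ => ?_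
    have hlin : ∀ (v : Fin m → A) (f : Fin (m / 2) → A),
        P (Function.update f i (∑ k, v k)) = ∑ k, P (Function.update f i (v k)) := by
      intro v f
      exact map_sum (P.toLinearMap f i) v Finset.univ
    have hsm : ∀ (c : ℂ) (y : A) (f : Fin (m / 2) → A),
        P (Function.update f i (c • y)) = c • P (Function.update f i y) :=
      fun c y f => P.map_update_smul f i c y
    calc (List.ofFn (Function.update
          (fun i' : Fin (m / 2) =>
            M (σ ⟨2 * i'.1, by have := i'.2; omega⟩) (σ ⟨2 * i'.1 + 1, by have := i'.2; omega⟩))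
          i (adL x (M (σ ⟨2 * i.1, by have := i.2; omega⟩) (σ ⟨2 * i.1 + 1, by have := i.2; omega⟩))))).prod
        = P (Function.update
            (fun i' : Fin (m / 2) =>
              M (σ ⟨2 * i'.1, by have := i'.2; omega⟩) (σ ⟨2 * i'.1 + 1, by have := i'.2; omega⟩))
            i ((∑ k, Z k (σ ⟨2 * i.1, by have := i.2; omega⟩) •
                  M k (σ ⟨2 * i.1 + 1, by have := i.2; omega⟩))
              + ∑ k, Z k (σ ⟨2 * i.1 + 1, by have := i.2; omega⟩) •
                  M (σ ⟨2 * i.1, by have := i.2; omega⟩) k)) := by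
          rw [← hxM, ← adL_apply]
          rw [hP, MultilinearMap.mkPiAlgebraFin_apply]
      _ = (∑ k, Z k (σ ⟨2 * i.1, by have := i.2; omega⟩) •
              F (Function.update (⇑σ) ⟨2 * i.1, by have := i.2; omega⟩ k))
          + ∑ k, Z k (σ ⟨2 * i.1 + 1, by have := i.2; omega⟩) •
              F (Function.update (⇑σ) ⟨2 * i.1 + 1, by have := i.2; omega⟩ k) := by
          rw [MultilinearMap.map_update_add, hlin, hlin]
          congr 1
          · refine Finset.sum_congr rfl fun k _ => ?_
            rw [hsm, hupd1]
          · refine Finset.sum_congr rfl fun k _ => ?_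
            rw [hsm, hupd2]
  -- the global sum vanishes
  have total : ∑ σ : Equiv.Perm (Fin m), (Equiv.Perm.sign σ : ℤ) • adL x (F ⇑σ) = 0 := by
    have step1 : ∑ σ : Equiv.Perm (Fin m), (Equiv.Perm.sign σ : ℤ) • adL x (F ⇑σ)
        = ∑ p : Equiv.Perm (Fin m) × Fin m × Fin m,
            (Equiv.Perm.sign p.1 : ℤ) • Z p.2.2 (p.1 p.2.1) •
              F (Function.update (⇑p.1) p.2.1 p.2.2) := by
      rw [Fintype.sum_prod_type]
      refine Finset.sum_congr rfl fun σ _ => ?_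
      rw [hDF, Finset.smul_sum, Fintype.sum_prod_type]
      refine Finset.sum_congr rfl fun t _ => ?_
      rw [Finset.smul_sum]
    rw [step1]
    rw [← Finset.sum_filter_add_sum_filter_not Finset.univ
      (fun p : Equiv.Perm (Fin m) × Fin m × Fin m => p.1 p.2.1 = p.2.2)]
    have partA : ∑ p ∈ Finset.univ.filter
          (fun p : Equiv.Perm (Fin m) × Fin m × Fin m => p.1 p.2.1 = p.2.2),
          (Equiv.Perm.sign p.1 : ℤ) • Z p.2.2 (p.1 p.2.1) •
            F (Function.update (⇑p.1) p.2.1 p.2.2) = 0 := by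
      rw [Finset.sum_filter, Fintype.sum_prod_type]
      have : ∀ σ : Equiv.Perm (Fin m),
          ∑ q : Fin m × Fin m, (if σ q.1 = q.2 then
              (Equiv.Perm.sign σ : ℤ) • Z q.2 (σ q.1) • F (Function.update (⇑σ) q.1 q.2) else 0)
            = 0 := by
        intro σ
        rw [Fintype.sum_prod_type]
        have hinner : ∀ t : Fin m,
            ∑ k : Fin m, (if σ t = k then
                (Equiv.Perm.sign σ : ℤ) • Z k (σ t) • F (Function.update (⇑σ) t k) else 0)
              = (Equiv.Perm.sign σ : ℤ) • Z (σ t) (σ t) • F ⇑σ := by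
          intro t
          rw [Finset.sum_ite_eq Finset.univ (σ t)
            (fun k => (Equiv.Perm.sign σ : ℤ) • Z k (σ t) • F (Function.update (⇑σ) t k)),
            if_pos (Finset.mem_univ _), Function.update_eq_self]
        rw [Finset.sum_congr rfl fun t _ => hinner t]
        have : ∑ t : Fin m, (Equiv.Perm.sign σ : ℤ) • Z (σ t) (σ t) • F ⇑σ
            = (Equiv.Perm.sign σ : ℤ) • (∑ t : Fin m, Z (σ t) (σ t)) • F ⇑σ := by
          rw [← Finset.smul_sum, ← Finset.sum_smul]
        rw [this]
        have htr : ∑ t : Fin m, Z (σ t) (σ t) = 0 := by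
          rw [Equiv.sum_comp σ (fun j => Z j j)]
          simpa [Matrix.trace, Matrix.diag] using hZ
        rw [htr, zero_smul, smul_zero]
      rw [Finset.sum_congr rfl fun σ _ => this σ, Finset.sum_const_zero]
    have partB : ∑ p ∈ Finset.univ.filter
          (fun p : Equiv.Perm (Fin m) × Fin m × Fin m => ¬ p.1 p.2.1 = p.2.2),
          (Equiv.Perm.sign p.1 : ℤ) • Z p.2.2 (p.1 p.2.1) •
            F (Function.update (⇑p.1) p.2.1 p.2.2) = 0 := by
      set s := Finset.univ.filter
          (fun p : Equiv.Perm (Fin m) × Fin m × Fin m => ¬ p.1 p.2.1 = p.2.2) with hs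
      set T : Equiv.Perm (Fin m) × Fin m × Fin m → A := fun p =>
        (Equiv.Perm.sign p.1 : ℤ) • Z p.2.2 (p.1 p.2.1) •
          F (Function.update (⇑p.1) p.2.1 p.2.2) with hT
      set gf : Equiv.Perm (Fin m) × Fin m × Fin m → Equiv.Perm (Fin m) × Fin m × Fin m :=
        fun p => (p.1 * Equiv.swap p.2.1 (p.1⁻¹ p.2.2), p.1⁻¹ p.2.2, p.2.2) with hgf
      have hmem : ∀ p ∈ s, gf p ∈ s := by
        rintro ⟨σ, t, k⟩ hp
        have hne : σ t ≠ k := by simpa [hs] using hp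
        simp only [hs, Finset.mem_filter, Finset.mem_univ, true_and, hgf]
        show ¬ (σ * Equiv.swap t (σ⁻¹ k)) (σ⁻¹ k) = k
        rw [Equiv.Perm.mul_apply, Equiv.swap_apply_right]
        exact hne
      have hcancel : ∀ p ∈ s, T p + T (gf p) = 0 := by
        rintro ⟨σ, t, k⟩ hp
        have hne : σ t ≠ k := by simpa [hs] using hp
        have htp : t ≠ σ⁻¹ k := by
          intro h; apply hne; rw [h, Equiv.Perm.coe_inv, Equiv.apply_symm_apply]
        have hsign : (Equiv.Perm.sign (σ * Equiv.swap t (σ⁻¹ k)) : ℤ)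
            = -(Equiv.Perm.sign σ : ℤ) := by
          rw [Equiv.Perm.sign_mul, Equiv.Perm.sign_swap htp]
          simp
        have happ : (σ * Equiv.swap t (σ⁻¹ k)) (σ⁻¹ k) = σ t := by
          rw [Equiv.Perm.mul_apply, Equiv.swap_apply_right]
        have hFeq : Function.update (⇑(σ * Equiv.swap t (σ⁻¹ k))) (σ⁻¹ k) k
            = Function.update (⇑σ) t k := by
          funext y
          by_cases hy1 : y = σ⁻¹ k
          · subst hy1
            rw [Function.update_self, Function.update_of_ne (Ne.symm htp),
              Equiv.Perm.coe_inv, Equiv.apply_symm_apply]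
          · rw [Function.update_of_ne hy1]
            by_cases hy2 : y = t
            · subst hy2
              rw [Function.update_self, Equiv.Perm.mul_apply, Equiv.swap_apply_left,
                Equiv.Perm.coe_inv, Equiv.apply_symm_apply]
            · rw [Function.update_of_ne hy2, Equiv.Perm.mul_apply,
                Equiv.swap_apply_of_ne_of_ne hy2 hy1]
        show T (σ, t, k) + T (σ * Equiv.swap t (σ⁻¹ k), σ⁻¹ k, k) = 0
        simp only [hT]
        rw [show ((σ * Equiv.swap t (σ⁻¹ k), σ⁻¹ k, k) :
            Equiv.Perm (Fin m) × Fin m × Fin m).1 ((σ * Equiv.swap t (σ⁻¹ k), σ⁻¹ k, k).2.1)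
            = σ t from happ]
        rw [show Function.update (⇑(σ * Equiv.swap t (σ⁻¹ k), σ⁻¹ k, k).1)
            ((σ * Equiv.swap t (σ⁻¹ k), σ⁻¹ k, k).2.1)
            ((σ * Equiv.swap t (σ⁻¹ k), σ⁻¹ k, k).2.2)
            = Function.update (⇑σ) t k from hFeq]
        rw [show ((Equiv.Perm.sign (σ * Equiv.swap t (σ⁻¹ k), σ⁻¹ k, k).1 : ℤˣ) : ℤ)
            = -(Equiv.Perm.sign σ : ℤ) from hsign]
        rw [neg_smul]
        exact add_neg_cancel _
      have hginv : ∀ p ∈ s, gf (gf p) = p := by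
        rintro ⟨σ, t, k⟩ hp
        have hne : σ t ≠ k := by simpa [hs] using hp
        have hk : (σ * Equiv.swap t (σ⁻¹ k)) t = k := by
          rw [Equiv.Perm.mul_apply, Equiv.swap_apply_left, Equiv.Perm.coe_inv, Equiv.apply_symm_apply]
        have h1 : (σ * Equiv.swap t (σ⁻¹ k))⁻¹ k = t := by
          apply Equiv.injective (σ * Equiv.swap t (σ⁻¹ k))
          rw [Equiv.Perm.coe_inv (σ * Equiv.swap t (σ⁻¹ k)), Equiv.apply_symm_apply]
          exact hk.symm
        show (_, _, _) = (σ, t, k)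
        simp only [hgf, h1]
        have h2 : σ * Equiv.swap t (σ⁻¹ k) * Equiv.swap (σ⁻¹ k) t = σ := by
          rw [Equiv.swap_comm (σ⁻¹ k) t, mul_assoc, Equiv.swap_mul_self, mul_one]
        rw [h2]
      have hgne : ∀ p ∈ s, T p ≠ 0 → gf p ≠ p := by
        rintro ⟨σ, t, k⟩ hp _
        have hne : σ t ≠ k := by simpa [hs] using hp
        intro hc
        apply hne
        have h2 : σ⁻¹ k = t := congrArg (fun q => q.2.1) hc
        rw [← h2, Equiv.Perm.coe_inv, Equiv.apply_symm_apply]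
      exact Finset.sum_involution (fun p hp => gf p) hcancel hgne hmem
        (fun p hp => hginv p hp)
    rw [partA, partB, add_zero]
  -- conclude
  have hzero : adL x (ncPf M) = 0 := by
    rw [hPf, LinearMap.map_smul, map_sum]
    have : ∀ σ : Equiv.Perm (Fin m),
        adL x ((Equiv.Perm.sign σ : ℤ) • F ⇑σ) = (Equiv.Perm.sign σ : ℤ) • adL x (F ⇑σ) :=
      fun σ => map_zsmul (adL x) _ _
    rw [Finset.sum_congr rfl fun σ _ => this σ, total, smul_zero]
  have := adL_apply x (ncPf M) ▸ hzero
  exact sub_eq_zero.mp this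

end Key

/-- for an invertible symmetric `2n×2n` complex matrix `S`, with
`𝔤 = {X : Xᵀ S + S X = 0}` and `X_{i,j} = E_{i,j} − S⁻¹ E_{j,i} S ∈ 𝔤`
(encoded by the family `𝒳` of elements of `𝔤` with the prescribed matrix values),
the matrix `X̃_{i,j} = Σ_k S_{k,j} ι(X_{i,k})` over `U(𝔤)` is alternating, and its Pfaffian
is central in `U(𝔤)`. -/
theorem ncPf_is_central (n : ℕ) (hn : 1 ≤ n)
    (S : Matrix (Fin (2 * n)) (Fin (2 * n)) ℂ) (hS : IsUnit S.det) (hSymm : Sᵀ = S)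
    (𝒳 : Fin (2 * n) → Fin (2 * n) → skewAdjointMatricesLieSubalgebra S)
    (h𝒳 : ∀ i j, (𝒳 i j : Matrix (Fin (2 * n)) (Fin (2 * n)) ℂ) =
      Matrix.single i j 1 - S⁻¹ * Matrix.single j i 1 * S) :
    (∀ i j : Fin (2 * n),
      (∑ k : Fin (2 * n), S k i • UniversalEnvelopingAlgebra.ι ℂ (𝒳 j k)) =
        - ∑ k : Fin (2 * n), S k j • UniversalEnvelopingAlgebra.ι ℂ (𝒳 i k)) ∧
    (∀ u : UniversalEnvelopingAlgebra ℂ (skewAdjointMatricesLieSubalgebra S),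
      ncPf (Matrix.of fun i j : Fin (2 * n) =>
          ∑ k : Fin (2 * n), S k j • UniversalEnvelopingAlgebra.ι ℂ (𝒳 i k)) * u =
        u * ncPf (Matrix.of fun i j : Fin (2 * n) =>
          ∑ k : Fin (2 * n), S k j • UniversalEnvelopingAlgebra.ι ℂ (𝒳 i k))) := by
  classical
  letI := LieRing.ofAssociativeRing (A := UniversalEnvelopingAlgebra ℂ (skewAdjointMatricesLieSubalgebra S))
  letI := LieAlgebra.ofAssociativeAlgebra (R := ℂ) (A := UniversalEnvelopingAlgebra ℂ (skewAdjointMatricesLieSubalgebra S))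
  have hS1 : S⁻¹ * S = 1 := Matrix.nonsing_inv_mul S hS
  have hS2 : S * S⁻¹ = 1 := Matrix.mul_nonsing_inv S hS
  have hsy : ∀ a b, S a b = S b a := by
    intro a b
    conv_lhs => rw [← hSymm]
    rw [Matrix.transpose_apply]
  -- the elements Y i j = ∑ k, S k j • 𝒳 i k of the Lie algebra
  set Y : Fin (2 * n) → Fin (2 * n) → skewAdjointMatricesLieSubalgebra S :=
    fun i j => ∑ k, S k j • 𝒳 i k with hY
  have hYcoe : ∀ i j, ((Y i j : Matrix (Fin (2 * n)) (Fin (2 * n)) ℂ))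
      = ∑ k, S k j • ((𝒳 i k : Matrix (Fin (2 * n)) (Fin (2 * n)) ℂ)) := by
    intro i j
    rw [hY]
    rw [AddSubmonoidClass.coe_finset_sum]
    exact Finset.sum_congr rfl fun k _ => rfl
  -- matrix-level description of Y
  have hA : ∀ i j, ∑ k, S k j • Matrix.single i k (1 : ℂ)
      = Matrix.single i j 1 * S := by
    intro i j
    ext a b
    simp [Matrix.sum_apply, Matrix.mul_apply, Matrix.single, Matrix.of_apply, ite_and,
      mul_ite, ite_mul, Finset.sum_ite_eq, Finset.sum_ite_eq', hsy a i, hsy b j]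
  have hC : ∀ i j, ∑ k, S k j • Matrix.single k i (1 : ℂ)
      = S * Matrix.single j i 1 := by
    intro i j
    ext a b
    simp [Matrix.sum_apply, Matrix.mul_apply, Matrix.single, Matrix.of_apply, ite_and,
      mul_ite, ite_mul, Finset.sum_ite_eq, Finset.sum_ite_eq', hsy a j, hsy b i]
  have hYmat : ∀ i j, ((Y i j : Matrix (Fin (2 * n)) (Fin (2 * n)) ℂ))
      = Matrix.single i j 1 * S - Matrix.single j i 1 * S := by
    intro i j
    rw [hYcoe]
    have : ∀ k, S k j • ((𝒳 i k : Matrix (Fin (2 * n)) (Fin (2 * n)) ℂ))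
        = S k j • Matrix.single i k (1 : ℂ)
          - S⁻¹ * (S k j • Matrix.single k i (1 : ℂ)) * S := by
      intro k
      rw [h𝒳, smul_sub]
      congr 1
      rw [Matrix.mul_smul, Matrix.smul_mul]
    rw [Finset.sum_congr rfl fun k _ => this k, Finset.sum_sub_distrib, hA]
    congr 1
    rw [← Finset.sum_mul, ← Finset.mul_sum, hC, ← mul_assoc, hS1, one_mul]
  -- entrywise description of Y
  have hES : ∀ (p q a b : Fin (2 * n)),
      (Matrix.single p q (1 : ℂ) * S) a b = if a = p then S b q else 0 := by
    intro p q a b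
    simp [Matrix.mul_apply, Matrix.single, Matrix.of_apply, ite_and, ite_mul,
      Finset.sum_ite_eq, Finset.sum_ite_eq', hsy b q, eq_comm (a := p) (b := a)]
  have hYe : ∀ i j a b, ((Y i j : Matrix (Fin (2 * n)) (Fin (2 * n)) ℂ)) a b
      = (if a = i then S b j else 0) - (if a = j then S b i else 0) := by
    intro i j a b
    rw [hYmat, Matrix.sub_apply, hES, hES]
  -- the skew-adjointness relation, entrywise
  have hskew : ∀ x : skewAdjointMatricesLieSubalgebra S, ∀ q b : Fin (2 * n),
      ∑ c, (x : Matrix (Fin (2 * n)) (Fin (2 * n)) ℂ) c q * S c b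
        = -∑ c, S q c * (x : Matrix (Fin (2 * n)) (Fin (2 * n)) ℂ) c b := by
    intro x q b
    have hx : (x : Matrix (Fin (2 * n)) (Fin (2 * n)) ℂ)ᵀ * S
        = S * (-(x : Matrix (Fin (2 * n)) (Fin (2 * n)) ℂ)) :=
      (mem_skewAdjointMatricesSubmodule S _).mp x.2
    have h := congrFun (congrFun hx q) b
    simpa [Matrix.mul_apply, Matrix.transpose_apply, Matrix.neg_apply, Finset.mul_sum,
      Finset.sum_neg_distrib, mul_comm] using h
  -- trace of any element vanishes
  have htr : ∀ x : skewAdjointMatricesLieSubalgebra S,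
      Matrix.trace ((x : Matrix (Fin (2 * n)) (Fin (2 * n)) ℂ)) = 0 := by
    intro x
    have hx : (x : Matrix (Fin (2 * n)) (Fin (2 * n)) ℂ)ᵀ * S
        = S * (-(x : Matrix (Fin (2 * n)) (Fin (2 * n)) ℂ)) :=
      (mem_skewAdjointMatricesSubmodule S _).mp x.2
    have e1 : (x : Matrix (Fin (2 * n)) (Fin (2 * n)) ℂ)ᵀ
        = S * (-(x : Matrix (Fin (2 * n)) (Fin (2 * n)) ℂ)) * S⁻¹ := by
      rw [← hx, mul_assoc, hS2, mul_one]
    have e2 := congrArg Matrix.trace e1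
    rw [Matrix.trace_transpose, Matrix.trace_mul_cycle, hS1, one_mul,
      Matrix.trace_neg] at e2
    exact add_self_eq_zero.mp (by linear_combination e2)
  -- the bracket relation
  have hbr : ∀ (x : skewAdjointMatricesLieSubalgebra S) (i j : Fin (2 * n)),
      ⁅x, Y i j⁆ = (∑ k, (x : Matrix (Fin (2 * n)) (Fin (2 * n)) ℂ) k i • Y k j)
        + ∑ k, (x : Matrix (Fin (2 * n)) (Fin (2 * n)) ℂ) k j • Y i k := by
    intro x i j
    apply Subtype.ext
    set Z : Matrix (Fin (2 * n)) (Fin (2 * n)) ℂ := (x : Matrix (Fin (2 * n)) (Fin (2 * n)) ℂ)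
      with hZdef
    have hcoeL : ((⁅x, Y i j⁆ : skewAdjointMatricesLieSubalgebra S) :
        Matrix (Fin (2 * n)) (Fin (2 * n)) ℂ)
        = Z * (Y i j : Matrix (Fin (2 * n)) (Fin (2 * n)) ℂ)
          - (Y i j : Matrix (Fin (2 * n)) (Fin (2 * n)) ℂ) * Z := rfl
    have hcoeR : (((∑ k, Z k i • Y k j) + ∑ k, Z k j • Y i k :
        skewAdjointMatricesLieSubalgebra S) : Matrix (Fin (2 * n)) (Fin (2 * n)) ℂ)
        = (∑ k, Z k i • (Y k j : Matrix (Fin (2 * n)) (Fin (2 * n)) ℂ))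
          + ∑ k, Z k j • (Y i k : Matrix (Fin (2 * n)) (Fin (2 * n)) ℂ) := by
      push_cast [AddSubmonoidClass.coe_finset_sum]
      rfl
    rw [hcoeL, hcoeR]
    ext a b
    have h1 : (Z * (Y i j : Matrix (Fin (2 * n)) (Fin (2 * n)) ℂ)) a b
        = Z a i * S b j - Z a j * S b i := by
      rw [Matrix.mul_apply]
      have : ∀ c, Z a c * (Y i j : Matrix (Fin (2 * n)) (Fin (2 * n)) ℂ) c b
          = (if c = i then Z a c * S b j else 0) - (if c = j then Z a c * S b i else 0) := by
        intro c; rw [hYe, mul_sub]; simp only [mul_ite, mul_zero]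
      rw [Finset.sum_congr rfl fun c _ => this c, Finset.sum_sub_distrib,
        Finset.sum_ite_eq' Finset.univ i (fun c => Z a c * S b j),
        Finset.sum_ite_eq' Finset.univ j (fun c => Z a c * S b i)]
      simp
    have h2 : ((Y i j : Matrix (Fin (2 * n)) (Fin (2 * n)) ℂ) * Z) a b
        = (if a = i then ∑ c, S c j * Z c b else 0) - (if a = j then ∑ c, S c i * Z c b else 0) := by
      rw [Matrix.mul_apply]
      have : ∀ c, (Y i j : Matrix (Fin (2 * n)) (Fin (2 * n)) ℂ) a c * Z c b
          = (if a = i then S c j * Z c b else 0) - (if a = j then S c i * Z c b else 0) := by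
        intro c; rw [hYe, sub_mul]; simp only [ite_mul, zero_mul]
      rw [Finset.sum_congr rfl fun c _ => this c, Finset.sum_sub_distrib]
      by_cases ha : a = i <;> by_cases hb2 : a = j <;> simp [ha, hb2]
    have h3 : (∑ k, Z k i • (Y k j : Matrix (Fin (2 * n)) (Fin (2 * n)) ℂ)) a b
        = Z a i * S b j - (if a = j then ∑ k, Z k i * S b k else 0) := by
      rw [Matrix.sum_apply]
      have : ∀ k, (Z k i • (Y k j : Matrix (Fin (2 * n)) (Fin (2 * n)) ℂ)) a b
          = (if a = k then Z k i * S b j else 0) - (if a = j then Z k i * S b k else 0) := by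
        intro k
        rw [Matrix.smul_apply, hYe, smul_eq_mul, mul_sub]
        simp only [mul_ite, mul_zero]
      rw [Finset.sum_congr rfl fun k _ => this k, Finset.sum_sub_distrib,
        Finset.sum_ite_eq Finset.univ a (fun k => Z k i * S b j)]
      by_cases hb2 : a = j <;> simp [hb2]
    have h4 : (∑ k, Z k j • (Y i k : Matrix (Fin (2 * n)) (Fin (2 * n)) ℂ)) a b
        = (if a = i then ∑ k, Z k j * S b k else 0) - Z a j * S b i := by
      rw [Matrix.sum_apply]
      have : ∀ k, (Z k j • (Y i k : Matrix (Fin (2 * n)) (Fin (2 * n)) ℂ)) a b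
          = (if a = i then Z k j * S b k else 0) - (if a = k then Z k j * S b i else 0) := by
        intro k
        rw [Matrix.smul_apply, hYe, smul_eq_mul, mul_sub]
        simp only [mul_ite, mul_zero]
      rw [Finset.sum_congr rfl fun k _ => this k, Finset.sum_sub_distrib,
        Finset.sum_ite_eq Finset.univ a (fun k => Z k j * S b i)]
      by_cases ha : a = i <;> simp [ha]
    have hAA : ∑ c, S c j * Z c b = -∑ k, Z k j * S b k := by
      have e1 : ∑ c, S c j * Z c b = ∑ c, S j c * Z c b :=
        Finset.sum_congr rfl fun c _ => by rw [hsy c j]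
      have e2 := hskew x j b
      rw [← hZdef] at e2
      have e3 : ∑ c, Z c j * S c b = ∑ k, Z k j * S b k :=
        Finset.sum_congr rfl fun c _ => by rw [hsy c b]
      rw [e1, ← e3]
      linear_combination e2
    have hBB : ∑ c, S c i * Z c b = -∑ k, Z k i * S b k := by
      have e1 : ∑ c, S c i * Z c b = ∑ c, S i c * Z c b :=
        Finset.sum_congr rfl fun c _ => by rw [hsy c i]
      have e2 := hskew x i b
      rw [← hZdef] at e2
      have e3 : ∑ c, Z c i * S c b = ∑ k, Z k i * S b k :=
        Finset.sum_congr rfl fun c _ => by rw [hsy c b]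
      rw [e1, ← e3]
      linear_combination e2
    rw [Matrix.sub_apply, Matrix.add_apply, h1, h2, h3, h4, hAA, hBB]
    by_cases ha : a = i <;> by_cases hb2 : a = j
    · subst ha; subst hb2; simp; try ring
    · subst ha; simp [hb2]; try ring
    · subst hb2; simp [ha]; try ring
    · simp [ha, hb2]; try ring
  -- relation between the two descriptions in the enveloping algebra
  have hιY : ∀ i j, (∑ k, S k j • UniversalEnvelopingAlgebra.ι ℂ (𝒳 i k))
      = UniversalEnvelopingAlgebra.ι ℂ (Y i j) := by
    intro i j
    rw [hY]
    show _ = (UniversalEnvelopingAlgebra.ι ℂ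
        (L := skewAdjointMatricesLieSubalgebra S)).toLinearMap (∑ k, S k j • 𝒳 i k)
    rw [map_sum]
    exact Finset.sum_congr rfl fun k _ => (_root_.map_smul
      (UniversalEnvelopingAlgebra.ι ℂ
        (L := skewAdjointMatricesLieSubalgebra S)).toLinearMap _ _).symm
  constructor
  · -- alternating
    intro i j
    rw [hιY, hιY]
    have hneg : Y j i = -Y i j := by
      apply Subtype.ext
      have : ((-Y i j : skewAdjointMatricesLieSubalgebra S) :
          Matrix (Fin (2 * n)) (Fin (2 * n)) ℂ)
          = -((Y i j : skewAdjointMatricesLieSubalgebra S) :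
              Matrix (Fin (2 * n)) (Fin (2 * n)) ℂ) := rfl
      rw [this, hYmat, hYmat]
      abel
    rw [hneg, map_neg]
  · -- centrality
    intro u
    set M : Matrix (Fin (2 * n)) (Fin (2 * n))
        (UniversalEnvelopingAlgebra ℂ (skewAdjointMatricesLieSubalgebra S)) :=
      Matrix.of fun i j : Fin (2 * n) =>
        ∑ k : Fin (2 * n), S k j • UniversalEnvelopingAlgebra.ι ℂ (𝒳 i k) with hM
    have hMapp : ∀ i j, M i j = UniversalEnvelopingAlgebra.ι ℂ (Y i j) := by
      intro i j
      rw [hM]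
      show (∑ k, S k j • UniversalEnvelopingAlgebra.ι ℂ (𝒳 i k)) = _
      exact hιY i j
    obtain ⟨t, rfl⟩ : ∃ t, UniversalEnvelopingAlgebra.mkAlgHom ℂ (skewAdjointMatricesLieSubalgebra S) t = u :=
      RingCon.mkₐ_surjective (α := ℂ) _ u
    induction t using TensorAlgebra.induction with
    | algebraMap r =>
        rw [AlgHom.commutes]
        exact (Algebra.commutes r _).symm
    | ι y =>
        have hι : (UniversalEnvelopingAlgebra.mkAlgHom ℂ
            (skewAdjointMatricesLieSubalgebra S))
            (TensorAlgebra.ι ℂ y) = UniversalEnvelopingAlgebra.ι ℂ y := by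
          rw [UniversalEnvelopingAlgebra.ι_apply]
        rw [hι]
        refine (ncPf_comm (by omega) M ((y : Matrix (Fin (2 * n)) (Fin (2 * n)) ℂ)) (htr y)
          (UniversalEnvelopingAlgebra.ι ℂ y) ?_).symm
        intro i j
        rw [hMapp]
        have hlie : UniversalEnvelopingAlgebra.ι ℂ y * UniversalEnvelopingAlgebra.ι ℂ (Y i j)
            - UniversalEnvelopingAlgebra.ι ℂ (Y i j) * UniversalEnvelopingAlgebra.ι ℂ y
            = UniversalEnvelopingAlgebra.ι ℂ ⁅y, Y i j⁆ := by
          rw [LieHom.map_lie]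
          rfl
        rw [hlie, hbr y i j, map_add]
        congr 1
        · show (UniversalEnvelopingAlgebra.ι ℂ
              (L := skewAdjointMatricesLieSubalgebra S)).toLinearMap
              (∑ k, (y : Matrix (Fin (2 * n)) (Fin (2 * n)) ℂ) k i • Y k j) = _
          rw [map_sum]
          refine Finset.sum_congr rfl fun k _ => ?_
          rw [_root_.map_smul, hMapp]
          rfl
        · show (UniversalEnvelopingAlgebra.ι ℂ
              (L := skewAdjointMatricesLieSubalgebra S)).toLinearMap
              (∑ k, (y : Matrix (Fin (2 * n)) (Fin (2 * n)) ℂ) k j • Y i k) = _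
          rw [map_sum]
          refine Finset.sum_congr rfl fun k _ => ?_
          rw [_root_.map_smul, hMapp]
          rfl
    | mul a b ha hb =>
        rw [_root_.map_mul, ← mul_assoc, ha, mul_assoc, hb, mul_assoc]
    | add a b ha hb =>
        rw [_root_.map_add, mul_add, add_mul, ha, hb]



end
end

section
/- In Λ: Ω^n = e_1 e_2 ⋯ e_{2n} · 2^n n! · Pf(𝑿), i.e. the n-th power of the 2-form Ω equals the top wedge e_1 ⋯ e_n e_{−n} ⋯ e_{−1} tensored with 2^n n! Pf(𝑿). -/
open Matrix
open scoped TensorProduct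

set_option synthInstance.maxHeartbeats 1000000
set_option maxHeartbeats 1000000

attribute [local instance] LieRing.ofAssociativeRing

noncomputable section

/-- The `N×N` matrix `J_N` with 1's on the anti-diagonal and 0's elsewhere. -/
def antiDiagJ (N : ℕ) : Matrix (Fin N) (Fin N) ℂ :=
  Matrix.of fun i j => if j = Fin.rev i then 1 else 0

/-- The orthogonal Lie algebra `𝔬_{2n} = {X : Xᵀ J_{2n} + J_{2n} X = 0}`. -/
abbrev oLie (n : ℕ) : LieSubalgebra ℂ (Matrix (Fin (2 * n)) (Fin (2 * n)) ℂ) :=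
  skewAdjointMatricesLieSubalgebra (antiDiagJ (2 * n))

/-- The universal enveloping algebra `U(𝔬_{2n})`. -/
abbrev Uo (n : ℕ) := UniversalEnvelopingAlgebra ℂ (oLie n)

/-- The canonical map `ι : 𝔬_{2n} → U(𝔬_{2n})`. -/
def uIota (n : ℕ) : oLie n →ₗ⁅ℂ⁆ Uo n := UniversalEnvelopingAlgebra.ι ℂ

/-- `Λ := ⋀(ℂ^{2n}) ⊗ U(𝔬_{2n})`. -/
abbrev Lam (n : ℕ) := ExteriorAlgebra ℂ (Fin (2 * n) → ℂ) ⊗[ℂ] Uo n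

/-- `e_i ∈ Λ`, the image of the `i`-th standard basis vector. -/
def eL (n : ℕ) (i : Fin (2 * n)) : Lam n :=
  ExteriorAlgebra.ι ℂ (Pi.single i 1) ⊗ₜ[ℂ] 1

/-- The embedding `U(𝔬_{2n}) → Λ`, `u ↦ 1 ⊗ u`. -/
def embU (n : ℕ) (u : Uo n) : Lam n := 1 ⊗ₜ[ℂ] u



lemma pow_sum_eq {A ι : Type*} [Ring A] [Fintype ι] (t : ι → A) (m : ℕ) :
    (∑ p, t p) ^ m = ∑ f : Fin m → ι, (List.ofFn fun k => t (f k)).prod := by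
  induction m with
  | zero => simp
  | succ m ih =>
    rw [pow_succ', ih, Finset.sum_mul_sum]
    rw [← Equiv.sum_comp (Fin.consEquiv fun _ : Fin (m+1) => ι)
      (fun f => (List.ofFn fun k => t (f k)).prod)]
    rw [Fintype.sum_prod_type]
    refine Finset.sum_congr rfl fun p _ => ?_
    refine Finset.sum_congr rfl fun f _ => ?_
    simp [Fin.consEquiv, List.ofFn_succ]

lemma ofFn_tmul_prod {B C : Type*} [Ring B] [Algebra ℂ B] [Ring C] [Algebra ℂ C]
    (m : ℕ) : ∀ (a : Fin m → B) (b : Fin m → C),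
    (List.ofFn fun k => a k ⊗ₜ[ℂ] b k).prod
      = (List.ofFn a).prod ⊗ₜ[ℂ] (List.ofFn b).prod := by
  induction m with
  | zero => intro a b; simp [Algebra.TensorProduct.one_def]
  | succ m ih =>
    intro a b
    simp only [List.ofFn_succ, List.prod_cons, ih, Algebra.TensorProduct.tmul_mul_tmul]

lemma prod_range_pairs {A : Type*} [Monoid A] (x : ℕ → A) (m : ℕ) :
    ((List.range m).map fun k => x (2*k) * x (2*k+1)).prod
      = ((List.range (2*m)).map x).prod := by
  induction m with
  | zero => simp
  | succ m ih =>
    rw [List.range_succ, show 2*(m+1) = (2*m+1)+1 by ring, List.range_succ,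
      List.range_succ]
    simp [ih, mul_assoc]

lemma ofFn_eq_range_map {A : Type*} (N : ℕ) (f : Fin N → A) (x : ℕ → A)
    (h : ∀ (j : ℕ) (hj : j < N), f ⟨j, hj⟩ = x j) :
    List.ofFn f = (List.range N).map x := by
  apply List.ext_getElem (by simp)
  intro j h1 h2
  simp only [List.getElem_ofFn, List.getElem_map, List.getElem_range]
  exact h j (by simpa using h1)

lemma ext_prod_not_inj {N : ℕ} (g : Fin N → Fin N) (hg : ¬ Function.Injective g) :
    (List.ofFn fun j => ExteriorAlgebra.ι ℂ (Pi.single (g j) (1:ℂ) : Fin N → ℂ)).prod = 0 := by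
  rw [← ExteriorAlgebra.ιMulti_apply]
  obtain ⟨i, j, hij, hne⟩ := Function.not_injective_iff.mp hg
  exact (ExteriorAlgebra.ιMulti ℂ N).map_eq_zero_of_eq _ (by rw [hij]) hne

lemma ext_prod_perm {N : ℕ} (σ : Equiv.Perm (Fin N)) :
    (List.ofFn fun j => ExteriorAlgebra.ι ℂ (Pi.single (σ j) (1:ℂ) : Fin N → ℂ)).prod
      = (Equiv.Perm.sign σ : ℤ) •
        (List.ofFn fun j => ExteriorAlgebra.ι ℂ (Pi.single j (1:ℂ) : Fin N → ℂ)).prod := by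
  rw [← ExteriorAlgebra.ιMulti_apply, ← ExteriorAlgebra.ιMulti_apply]
  have := (ExteriorAlgebra.ιMulti ℂ N).map_perm
    (fun j : Fin N => (Pi.single j (1:ℂ) : Fin N → ℂ)) σ
  rw [show ((fun j : Fin N => (Pi.single j (1:ℂ) : Fin N → ℂ)) ∘ σ)
      = fun j => (Pi.single (σ j) (1:ℂ) : Fin N → ℂ) from rfl] at this
  rw [this, Units.smul_def]

lemma fin_app_congr {α : Type*} {N : ℕ} (g : Fin N → α) {a b : Fin N} (h : a.1 = b.1) :
    g a = g b := by
  congr 1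
  exact Fin.ext h

def pairEquiv (n : ℕ) (ι : Type*) : (Fin (2*n) → ι) ≃ (Fin n → ι × ι) where
  toFun g k := (g ⟨2*k.1, by have := k.isLt; omega⟩, g ⟨2*k.1+1, by have := k.isLt; omega⟩)
  invFun f j := if h : j.1 % 2 = 0 then (f ⟨j.1/2, by have := j.isLt; omega⟩).1
    else (f ⟨j.1/2, by have := j.isLt; omega⟩).2
  left_inv g := by
    funext j
    dsimp only
    by_cases h : j.1 % 2 = 0
    · rw [dif_pos h]
      exact fin_app_congr g (show 2*(j.1/2) = j.1 by omega)
    · rw [dif_neg h]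
      exact fin_app_congr g (show 2*(j.1/2)+1 = j.1 by omega)
  right_inv f := by
    funext k
    have h1 : (2*k.1) % 2 = 0 := by omega
    have h2 : ¬ ((2*k.1+1) % 2 = 0) := by omega
    dsimp only
    refine Prod.ext ?_ ?_
    · show (if h : _ then _ else _) = _
      rw [dif_pos h1]
      exact congrArg Prod.fst (fin_app_congr f (show 2*k.1/2 = k.1 by omega))
    · show (if h : _ then _ else _) = _
      rw [dif_neg h2]
      exact congrArg Prod.snd (fin_app_congr f (show (2*k.1+1)/2 = k.1 by omega))

def padded {A : Type*} [One A] (N : ℕ) (y : Fin N → A) : ℕ → A :=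
  fun j => if h : j < N then y ⟨j, h⟩ else 1

lemma interleave_prod {A : Type*} [Monoid A] (n : ℕ) (y : Fin (2*n) → A) :
    (List.ofFn fun k : Fin n => y ⟨2*k.1, by have := k.isLt; omega⟩
        * y ⟨2*k.1+1, by have := k.isLt; omega⟩).prod
      = (List.ofFn y).prod := by
  rw [ofFn_eq_range_map (2*n) y (padded (2*n) y) (fun j hj => by simp only [padded]; rw [dif_pos hj]),
    ofFn_eq_range_map n _ (fun k => padded (2*n) y (2*k) * padded (2*n) y (2*k+1)) ?_,
    prod_range_pairs]
  intro k hk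
  simp only [padded]
  rw [dif_pos (show 2*k < 2*n by omega), dif_pos (show 2*k+1 < 2*n by omega)]

/-- in `Λ = ⋀(ℂ^{2n}) ⊗ U(𝔬_{2n})`, with
`Ω = Σ_{i,j∈[2n]} e_i e_{−j} ι(X_{i,j})` (0-indexed, `−j` is `Fin.rev j`), one has
`Ω^n = e_1 ⋯ e_{2n} · 2^n n! · Pf(𝑿)`, where `Pf(𝑿)` is the noncommutative Pfaffian of the
alternating matrix `(ι(X_{i,−j}))_{i,j}`. -/
theorem omega_pow_eq_ncPfaffian (n : ℕ) (hn : 1 ≤ n)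
    (𝒳 : Fin (2 * n) → Fin (2 * n) → oLie n)
    (h𝒳 : ∀ i j, (𝒳 i j : Matrix (Fin (2 * n)) (Fin (2 * n)) ℂ) =
      Matrix.single i j 1 - Matrix.single (Fin.rev j) (Fin.rev i) 1) :
    (∑ i : Fin (2 * n), ∑ j : Fin (2 * n),
        eL n i * eL n (Fin.rev j) * embU n (uIota n (𝒳 i j))) ^ n =
      (List.ofFn fun i : Fin (2 * n) => eL n i).prod *
        (((2 : ℂ) ^ n * n.factorial) •
          embU n (ncPf (Matrix.of fun i j : Fin (2 * n) => uIota n (𝒳 i (Fin.rev j))))) := by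
  classical
  set ε : Fin (2*n) → ExteriorAlgebra ℂ (Fin (2*n) → ℂ) :=
    fun i => ExteriorAlgebra.ι ℂ (Pi.single i 1) with hε
  set M : Fin (2*n) → Fin (2*n) → Uo n := fun i j => uIota n (𝒳 i (Fin.rev j)) with hM
  set E : Equiv ((Fin (2*n) → Fin (2*n))) (Fin n → Fin (2*n) × Fin (2*n)) :=
    pairEquiv n (Fin (2*n)) with hE
  set Etop : ExteriorAlgebra ℂ (Fin (2*n) → ℂ) := (List.ofFn fun j => ε j).prod with hEtop
  set P : (Fin (2*n) → Fin (2*n)) → Uo n :=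
    fun g => (List.ofFn fun k : Fin n => M (E g k).1 (E g k).2).prod with hP
  set c : ℂ := (2 : ℂ) ^ n * n.factorial with hc
  have hcne : c ≠ 0 := mul_ne_zero (pow_ne_zero _ two_ne_zero)
    (Nat.cast_ne_zero.mpr n.factorial_ne_zero)
  -- Step A : the sum is a sum of pure tensors over pairs
  have hΩ : (∑ i : Fin (2 * n), ∑ j : Fin (2 * n),
        eL n i * eL n (Fin.rev j) * embU n (uIota n (𝒳 i j)))
      = ∑ p : Fin (2*n) × Fin (2*n), (ε p.1 * ε p.2) ⊗ₜ[ℂ] M p.1 p.2 := by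
    rw [Fintype.sum_prod_type]
    refine Finset.sum_congr rfl fun i _ => ?_
    rw [← Function.Bijective.sum_comp Fin.rev_bijective
      (fun j => (ε i * ε j) ⊗ₜ[ℂ] M i j)]
    refine Finset.sum_congr rfl fun j _ => ?_
    simp [eL, embU, hM, hε, Algebra.TensorProduct.tmul_mul_tmul, Fin.rev_rev]
  rw [hΩ, pow_sum_eq]
  -- Step B : reindex by the interleaving equivalence
  rw [← Equiv.sum_comp E
    (fun f => (List.ofFn fun k => (ε (f k).1 * ε (f k).2) ⊗ₜ[ℂ] M (f k).1 (f k).2).prod)]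
  -- Step C : each term is a pure tensor
  have hterm : ∀ g : Fin (2*n) → Fin (2*n),
      (fun f => (List.ofFn fun k =>
          (ε (f k).1 * ε (f k).2) ⊗ₜ[ℂ] M (f k).1 (f k).2).prod) (E g)
        = (List.ofFn fun j => ε (g j)).prod ⊗ₜ[ℂ] P g := by
    intro g
    show (List.ofFn fun k => (ε (E g k).1 * ε (E g k).2) ⊗ₜ[ℂ] M (E g k).1 (E g k).2).prod
      = (List.ofFn fun j => ε (g j)).prod ⊗ₜ[ℂ] P g
    rw [ofFn_tmul_prod (a := fun k => ε (E g k).1 * ε (E g k).2)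
      (b := fun k => M (E g k).1 (E g k).2)]
    congr 1
    exact interleave_prod n (fun j => ε (g j))
  simp only [hterm]
  -- Step D : split off the non-injective part
  rw [← Finset.sum_filter_add_sum_filter_not Finset.univ
    (fun g : Fin (2*n) → Fin (2*n) => Function.Injective g)]
  have hzero : ∑ g ∈ Finset.univ.filter
      (fun g : Fin (2*n) → Fin (2*n) => ¬ Function.Injective g),
      (List.ofFn fun j => ε (g j)).prod ⊗ₜ[ℂ] P g = 0 := by
    refine Finset.sum_eq_zero fun g hg => ?_
    have : ¬ Function.Injective g := (Finset.mem_filter.mp hg).2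
    rw [ext_prod_not_inj g this, TensorProduct.zero_tmul]
  rw [hzero, add_zero]
  -- Step E : sum over injective maps = sum over permutations
  have hperm : ∑ g ∈ Finset.univ.filter
      (fun g : Fin (2*n) → Fin (2*n) => Function.Injective g),
      (List.ofFn fun j => ε (g j)).prod ⊗ₜ[ℂ] P g
      = ∑ σ : Equiv.Perm (Fin (2*n)),
        Etop ⊗ₜ[ℂ] ((Equiv.Perm.sign σ : ℤ) • P ⇑σ) := by
    refine Finset.sum_bij'
      (fun g hg => Equiv.ofBijective g
        (Finite.injective_iff_bijective.mp (Finset.mem_filter.mp hg).2))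
      (fun σ _ => ⇑σ) ?_ ?_ ?_ ?_ ?_
    · intro g hg; exact Finset.mem_univ _
    · intro σ _
      exact Finset.mem_filter.mpr ⟨Finset.mem_univ _, σ.injective⟩
    · intro g hg; rfl
    · intro σ _; exact Equiv.ext fun x => rfl
    · intro g hg
      have h1 : (List.ofFn fun j => ε (g j)).prod
          = (Equiv.Perm.sign (Equiv.ofBijective g
              (Finite.injective_iff_bijective.mp (Finset.mem_filter.mp hg).2)) : ℤ) • Etop :=
        ext_prod_perm (Equiv.ofBijective g
          (Finite.injective_iff_bijective.mp (Finset.mem_filter.mp hg).2))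
      rw [h1, TensorProduct.smul_tmul]
      rfl
  rw [hperm, ← TensorProduct.tmul_sum]
  -- Step F : compute the right-hand side
  have htop : (List.ofFn fun i : Fin (2*n) => eL n i).prod = Etop ⊗ₜ[ℂ] (1 : Uo n) := by
    rw [show (fun i : Fin (2*n) => eL n i)
        = fun i => ε i ⊗ₜ[ℂ] (1 : Uo n) from rfl,
      ofFn_tmul_prod (a := ε) (b := fun _ => (1 : Uo n))]
    congr 1
    rw [List.ofFn_const, List.prod_replicate, one_pow]
  have h2n : 2*n % 2 = 0 := by omega
  have hdiv : 2*n/2 = n := by omega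
  have hSpf : ncPf (Matrix.of fun i j : Fin (2 * n) => uIota n (𝒳 i (Fin.rev j)))
      = c⁻¹ • ∑ σ : Equiv.Perm (Fin (2*n)), (Equiv.Perm.sign σ : ℤ) • P ⇑σ := by
    rw [ncPf, dif_pos h2n]
    congr 1
    · rw [hdiv, hc]
    · refine Finset.sum_congr rfl fun σ _ => ?_
      congr 1
      rw [List.ofFn_congr hdiv]
      rfl
  rw [htop, hSpf, embU, TensorProduct.tmul_smul, smul_smul,
    mul_inv_cancel₀ hcne, one_smul, Algebra.TensorProduct.tmul_mul_tmul, mul_one, one_mul]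


end
end

section
/- For j ∈ [n] and u ∈ ℂ set η_j(u) := Σ_{i∈[n]} e_i · (a_{i,j} + u·δ_{i,j}) ∈ Λ. Then for all i,j ∈ [n] and all u ∈ ℂ: η_i(u+1) η_j(u) + η_j(u+1) η_i(u) = 0. -/
open Matrix
open scoped TensorProduct

set_option synthInstance.maxHeartbeats 1000000
set_option maxHeartbeats 1000000

noncomputable section

attribute [local instance] LieRing.ofAssociativeRing

/-- `η_j(u) := Σ_{i∈[n]} e_i (a_{i,j} + u δ_{i,j}) ∈ Λ`, with `a_{i,j} = ι(X_{i,j})`. -/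
def etaL (n : ℕ) (𝒳 : Fin (2 * n) → Fin (2 * n) → oLie n) (j : Fin n) (u : ℂ) : Lam n :=
  ∑ i : Fin n,
    eL n (Fin.castLE (by omega) i) *
      embU n (uIota n (𝒳 (Fin.castLE (by omega) i) (Fin.castLE (by omega) j)) +
        algebraMap ℂ (Uo n) (if i = j then u else 0))

-- auxiliary lemmas

lemma sum_antisym {A : Type*} [Ring A] [Algebra ℂ A] {N : ℕ}
    (E C : Fin N → Fin N → A)
    (hE : ∀ k l, E k l + E l k = 0) (hC : ∀ k l, C k l = C l k) :
    ∑ k, ∑ l, E k l * C k l = 0 := by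
  set S := ∑ k, ∑ l, E k l * C k l with hS
  have h2 : S + S = 0 := by
    nth_rewrite 2 [hS]
    rw [Finset.sum_comm, ← Finset.sum_add_distrib]
    refine Finset.sum_eq_zero fun k _ => ?_
    rw [← Finset.sum_add_distrib]
    refine Finset.sum_eq_zero fun l _ => ?_
    rw [hC l k, ← add_mul, hE, zero_mul]
  have h3 : (2:ℂ) • S = 0 := by rw [two_smul]; exact h2
  calc S = (2:ℂ)⁻¹ • ((2:ℂ) • S) := by rw [smul_smul]; norm_num
    _ = 0 := by rw [h3, smul_zero]

lemma eL_swap (n : ℕ) (x y : Fin (2*n)) : eL n x * eL n y + eL n y * eL n x = 0 := by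
  unfold eL
  rw [Algebra.TensorProduct.tmul_mul_tmul, Algebra.TensorProduct.tmul_mul_tmul,
    mul_one, ← TensorProduct.add_tmul, ExteriorAlgebra.ι_add_mul_swap,
    TensorProduct.zero_tmul]

lemma eL_embU_mul (n : ℕ) (x y : Fin (2*n)) (a b : Uo n) :
    (eL n x * embU n a) * (eL n y * embU n b) = (eL n x * eL n y) * embU n (a * b) := by
  unfold eL embU
  simp [Algebra.TensorProduct.tmul_mul_tmul]

lemma castLE_ne_rev (n : ℕ) (a b : Fin n) :
    Fin.castLE (by omega : n ≤ 2*n) a ≠ Fin.rev (Fin.castLE (by omega) b) := by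
  intro hab
  have := congrArg Fin.val hab
  simp [Fin.val_rev] at this
  omega


lemma stdmul {N : ℕ} (a b c d : Fin N) :
    Matrix.single a b (1:ℂ) * Matrix.single c d 1 =
      if b = c then Matrix.single a d 1 else 0 := by
  split
  · rename_i h; subst h
    rw [Matrix.single_mul_single_same, one_mul]
  · exact Matrix.single_mul_single_of_ne (1:ℂ) _ _ _ (by assumption) _
lemma bracket_X (n : ℕ) (𝒳 : Fin (2 * n) → Fin (2 * n) → oLie n)
    (h𝒳 : ∀ i j, (𝒳 i j : Matrix (Fin (2 * n)) (Fin (2 * n)) ℂ) =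
      Matrix.single i j 1 - Matrix.single (Fin.rev j) (Fin.rev i) 1)
    (k i l j : Fin n) :
    ⁅𝒳 (Fin.castLE (by omega) k) (Fin.castLE (by omega) i),
      𝒳 (Fin.castLE (by omega) l) (Fin.castLE (by omega) j)⁆ =
    (if l = i then 𝒳 (Fin.castLE (by omega) k) (Fin.castLE (by omega) j) else 0) -
    (if k = j then 𝒳 (Fin.castLE (by omega) l) (Fin.castLE (by omega) i) else 0) := by
  have hne := castLE_ne_rev n
  have hne' : ∀ (a b : Fin n), Fin.rev (Fin.castLE (by omega : n ≤ 2*n) a) ≠ Fin.castLE (by omega) b :=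
    fun a b hab => hne b a hab.symm
  by_cases hli : l = i <;> by_cases hkj : k = j <;>
  · try subst hli
    try subst hkj
    apply Subtype.ext
    rw [LieSubalgebra.coe_bracket, Ring.lie_def]
    push_cast
    simp only [apply_ite ((↑·) : oLie n → Matrix (Fin (2*n)) (Fin (2*n)) ℂ),
      ZeroMemClass.coe_zero, h𝒳, Matrix.sub_mul, Matrix.mul_sub, stdmul, hne, hne',
      Fin.castLE_inj, Fin.rev_inj, if_true, if_neg, if_false, eq_self_iff_true,
      ite_true, ite_false]
    try split_ifs <;> first | simp_all | abel
    try abel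

lemma uIota_comm (n : ℕ) (𝒳 : Fin (2 * n) → Fin (2 * n) → oLie n)
    (h𝒳 : ∀ i j, (𝒳 i j : Matrix (Fin (2 * n)) (Fin (2 * n)) ℂ) =
      Matrix.single i j 1 - Matrix.single (Fin.rev j) (Fin.rev i) 1)
    (k i l j : Fin n) :
    uIota n (𝒳 (Fin.castLE (by omega) k) (Fin.castLE (by omega) i)) *
      uIota n (𝒳 (Fin.castLE (by omega) l) (Fin.castLE (by omega) j)) =
    uIota n (𝒳 (Fin.castLE (by omega) l) (Fin.castLE (by omega) j)) *
      uIota n (𝒳 (Fin.castLE (by omega) k) (Fin.castLE (by omega) i)) +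
    (if l = i then (1:ℂ) else 0) •
      uIota n (𝒳 (Fin.castLE (by omega) k) (Fin.castLE (by omega) j)) -
    (if k = j then (1:ℂ) else 0) •
      uIota n (𝒳 (Fin.castLE (by omega) l) (Fin.castLE (by omega) i)) := by
  have h := congrArg (uIota n) (bracket_X n 𝒳 h𝒳 k i l j)
  rw [LieHom.map_lie, Ring.lie_def, map_sub, apply_ite (uIota n), apply_ite (uIota n),
    map_zero] at h
  have h' := sub_eq_iff_eq_add.mp h
  rw [h']
  split_ifs <;> simp <;> abel

lemma core_symm {n : ℕ} (P : Fin n → Fin n → Uo n) (u : ℂ) (k i l j : Fin n)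
    (h1 : P k i * P l j = P l j * P k i +
      (if l = i then (1:ℂ) else 0) • P k j - (if k = j then (1:ℂ) else 0) • P l i)
    (h2 : P k j * P l i = P l i * P k j +
      (if l = j then (1:ℂ) else 0) • P k i - (if k = i then (1:ℂ) else 0) • P l j) :
    (P k i + algebraMap ℂ (Uo n) (if k = i then u + 1 else 0)) *
        (P l j + algebraMap ℂ (Uo n) (if l = j then u else 0)) +
      (P k j + algebraMap ℂ (Uo n) (if k = j then u + 1 else 0)) *
        (P l i + algebraMap ℂ (Uo n) (if l = i then u else 0)) =
    (P l i + algebraMap ℂ (Uo n) (if l = i then u + 1 else 0)) *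
        (P k j + algebraMap ℂ (Uo n) (if k = j then u else 0)) +
      (P l j + algebraMap ℂ (Uo n) (if l = j then u + 1 else 0)) *
        (P k i + algebraMap ℂ (Uo n) (if k = i then u else 0)) := by
  have hw1 : ∀ (c : Prop) [Decidable c],
      (if c then u + 1 else 0) = (u + 1) * (if c then (1:ℂ) else 0) := by
    intro c _; split <;> simp
  have hw2 : ∀ (c : Prop) [Decidable c],
      (if c then u else 0) = u * (if c then (1:ℂ) else 0) := by
    intro c _; split <;> simp
  simp only [hw1, hw2, Algebra.algebraMap_eq_smul_one, add_mul, mul_add,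
    smul_mul_assoc, mul_smul_comm, one_mul, mul_one, smul_smul]
  rw [h1, h2]
  module

lemma embU_add (n : ℕ) (x y : Uo n) : embU n x + embU n y = embU n (x + y) :=
  (TensorProduct.tmul_add _ _ _).symm


/-- the shifted anticommutation relations
`η_i(u+1) η_j(u) + η_j(u+1) η_i(u) = 0` in `Λ`. -/
theorem eta_anticommutation (n : ℕ) (hn : 1 ≤ n)
    (𝒳 : Fin (2 * n) → Fin (2 * n) → oLie n)
    (h𝒳 : ∀ i j, (𝒳 i j : Matrix (Fin (2 * n)) (Fin (2 * n)) ℂ) =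
      Matrix.single i j 1 - Matrix.single (Fin.rev j) (Fin.rev i) 1) :
    ∀ (i j : Fin n) (u : ℂ),
      etaL n 𝒳 i (u + 1) * etaL n 𝒳 j u + etaL n 𝒳 j (u + 1) * etaL n 𝒳 i u = 0 := by
  intro i j u
  have hle : n ≤ 2 * n := by omega
  set c : Fin n → Fin (2 * n) := Fin.castLE hle with hc
  set P : Fin n → Fin n → Uo n := fun x y => uIota n (𝒳 (c x) (c y)) with hP
  have step : etaL n 𝒳 i (u + 1) * etaL n 𝒳 j u + etaL n 𝒳 j (u + 1) * etaL n 𝒳 i u =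
      ∑ k : Fin n, ∑ l : Fin n,
        (eL n (c k) * eL n (c l)) *
          embU n ((P k i + algebraMap ℂ (Uo n) (if k = i then u + 1 else 0)) *
              (P l j + algebraMap ℂ (Uo n) (if l = j then u else 0)) +
            (P k j + algebraMap ℂ (Uo n) (if k = j then u + 1 else 0)) *
              (P l i + algebraMap ℂ (Uo n) (if l = i then u else 0))) := by
    unfold etaL
    rw [Finset.sum_mul_sum, Finset.sum_mul_sum, ← Finset.sum_add_distrib]
    refine Finset.sum_congr rfl fun k _ => ?_
    rw [← Finset.sum_add_distrib]
    refine Finset.sum_congr rfl fun l _ => ?_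
    rw [eL_embU_mul, eL_embU_mul, ← mul_add, embU_add]
  rw [step]
  refine sum_antisym _ _ (fun k l => eL_swap n (c k) (c l)) fun k l => ?_
  congr 1
  exact core_symm P u k i l j (uIota_comm n 𝒳 h𝒳 k i l j) (uIota_comm n 𝒳 h𝒳 k j l i)


end
end
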